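/- For all integers n, k with n ≥ 2k > 0 and every natural number m with m > n·ln(n/k) + n, the following holds: for every finite set L of colors and every assignment of a list S(v) ⊆ L with |S(v)| = m to each k-element subset v of [n], there exists a coloring c of the k-element subsets of [n] with c(v) ∈ S(v) for every v, such that any two disjoint k-element subsets receive different colors. In particular, the choice number of the Kneser graph satisfies ch(KG_{n,k}) ≤ n·ln(n/k) + n. -/

import Mathlib

open Real

lemma key_ineq (n k m : ℕ) (hk : 0 < k) (hn : 2 * k ≤ n)
    (hm : (m : ℝ) > n * Real.log ((n : ℝ) / k) + n) :
    (n.choose k : ℝ) * ((n - k : ℕ) : ℝ) ^ m < (n : ℝ) ^ m := by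
  have hkn : k ≤ n := by omega
  have hn0 : 0 < n := by omega
  have hK : (0:ℝ) < k := by exact_mod_cast hk
  have hN : (0:ℝ) < n := by exact_mod_cast hn0
  have hKN : (k:ℝ) ≤ n := by exact_mod_cast hkn
  have hNK : ((n - k : ℕ) : ℝ) = (n:ℝ) - k := by
    push_cast [Nat.cast_sub hkn]; ring
  have hfact0 : (0:ℝ) < (k.factorial : ℝ) := by exact_mod_cast k.factorial_pos
  -- choose bound
  have hfac : ((k:ℝ)^k) / (k.factorial : ℝ) ≤ Real.exp k := Real.pow_div_factorial_le_exp (x := (k:ℝ)) hK.le k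
  have hchoose : (n.choose k : ℝ) ≤ (n:ℝ)^k / (k.factorial : ℝ) := Nat.choose_le_pow_div k n
  have h1 : (n.choose k : ℝ) ≤ (n:ℝ)^k * Real.exp k / (k:ℝ)^k := by
    refine hchoose.trans ?_
    rw [div_le_div_iff₀ hfact0 (by positivity)]
    have hkk : (k:ℝ)^k ≤ Real.exp k * (k.factorial : ℝ) := (div_le_iff₀ hfact0).mp hfac
    calc (n:ℝ)^k * (k:ℝ)^k ≤ (n:ℝ)^k * (Real.exp k * (k.factorial : ℝ)) :=
          mul_le_mul_of_nonneg_left hkk (by positivity)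
      _ = (n:ℝ)^k * Real.exp k * (k.factorial : ℝ) := by ring
  -- base bound
  have h2 : (n:ℝ) - k ≤ (n:ℝ) * Real.exp (-(k/n)) := by
    have h := Real.add_one_le_exp (-((k:ℝ)/n))
    have h' := mul_le_mul_of_nonneg_left h hN.le
    have he : (n:ℝ) * (-((k:ℝ)/n) + 1) = (n:ℝ) - k := by field_simp; ring
    linarith [h']
  have h3 : ((n - k : ℕ) : ℝ) ^ m ≤ ((n:ℝ) * Real.exp (-((k:ℝ)/n))) ^ m := by
    rw [hNK]
    exact pow_le_pow_left₀ (by linarith) h2 m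
  -- the exponential inequality
  have hr : (0:ℝ) < (n:ℝ)/k := by positivity
  have hlt : ((n:ℝ)/k)^k * Real.exp ((k:ℝ) + (m:ℝ) * (-((k:ℝ)/n))) < 1 := by
    have hpow : ((n:ℝ)/k)^k = Real.exp ((k:ℝ) * Real.log ((n:ℝ)/k)) := by
      rw [Real.exp_nat_mul, Real.exp_log hr]
    rw [hpow, ← Real.exp_add]
    rw [Real.exp_lt_one_iff]
    have h5 : ((n:ℝ)*Real.log ((n:ℝ)/k) + n) * ((k:ℝ)/n) = (k:ℝ) * Real.log ((n:ℝ)/k) + k := by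
      field_simp
    have h6 : ((n:ℝ)*Real.log ((n:ℝ)/k) + n) * ((k:ℝ)/n) < (m:ℝ) * ((k:ℝ)/n) :=
      mul_lt_mul_of_pos_right hm (by positivity)
    rw [h5] at h6
    linarith
  -- combine
  calc (n.choose k : ℝ) * ((n - k : ℕ) : ℝ) ^ m
      ≤ ((n:ℝ)^k * Real.exp k / (k:ℝ)^k) * (((n:ℝ) * Real.exp (-((k:ℝ)/n))) ^ m) := by
        apply mul_le_mul h1 h3 (by positivity) (by positivity)
    _ = (n:ℝ)^m * (((n:ℝ)/k)^k * Real.exp ((k:ℝ) + (m:ℝ) * (-((k:ℝ)/n)))) := by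
        rw [mul_pow, ← Real.exp_nat_mul, Real.exp_add, div_pow]
        ring
    _ < (n:ℝ)^m * 1 := by
        exact mul_lt_mul_of_pos_left hlt (by positivity)
    _ = (n:ℝ)^m := mul_one _



/-- Theorem 1 (upper bound): if each `k`-subset of `[n]` gets a list of `m` colors
with `m > n·ln(n/k) + n`, then there is a proper list coloring of the Kneser graph
`KG_{n,k}` (disjoint `k`-sets get different colors). -/
theorem stmt_0 {α : Type*} (n k m : ℕ) (hk : 0 < k) (hn : 2 * k ≤ n)
    (hm : (m : ℝ) > n * Real.log ((n : ℝ) / k) + n)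
    (L : Finset α)
    (S : {v : Finset (Fin n) // v.card = k} → Finset α)
    (hSL : ∀ v, S v ⊆ L) (hScard : ∀ v, (S v).card = m) :
    ∃ c : {v : Finset (Fin n) // v.card = k} → α,
      (∀ v, c v ∈ S v) ∧
      ∀ u v : {v : Finset (Fin n) // v.card = k}, Disjoint u.1 v.1 → c u ≠ c v := by
  classical
  have hkn : k ≤ n := by omega
  have hn0 : 0 < n := by omega
  obtain ⟨t0, ht0sub, ht0⟩ :=
    Finset.exists_subset_card_eq (s := (Finset.univ : Finset (Fin n))) (n := k) (by simpa using hkn)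
  have hmL : m ≤ L.card := by
    rw [← hScard ⟨t0, ht0⟩]; exact Finset.card_le_card (hSL ⟨t0, ht0⟩)
  set Ω : Finset (∀ a ∈ L, Fin n) := L.pi (fun _ => (Finset.univ : Finset (Fin n))) with hΩ
  set Bad : {v : Finset (Fin n) // v.card = k} → Finset (∀ a ∈ L, Fin n) :=
    fun v => L.pi (fun c => if c ∈ S v then (v.1)ᶜ else Finset.univ) with hBad
  have hΩcard : Ω.card = n ^ L.card := by
    rw [hΩ, Finset.card_pi]
    simp
  have hBadcard : ∀ v, (Bad v).card = (n - k) ^ m * n ^ (L.card - m) := by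
    intro v
    rw [hBad, Finset.card_pi]
    have hcongr : ∀ c ∈ L,
        (if c ∈ S v then (v.1)ᶜ else (Finset.univ : Finset (Fin n))).card
          = if c ∈ S v then n - k else n := by
      intro c _
      split_ifs <;> simp [Finset.card_compl, v.2]
    rw [Finset.prod_congr rfl hcongr, Finset.prod_ite, Finset.prod_const, Finset.prod_const]
    have hpos : (L.filter (· ∈ S v)).card = m := by
      rw [Finset.filter_mem_eq_inter, Finset.inter_eq_right.mpr (hSL v), hScard v]
    have htot := Finset.card_filter_add_card_filter_not (s := L) (p := (· ∈ S v))
    rw [hpos]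
    congr 2
    omega
  set B := (Finset.univ : Finset {v : Finset (Fin n) // v.card = k}).biUnion Bad with hB
  have hBcard : B.card < Ω.card := by
    have h1 : B.card ≤ n.choose k * ((n - k) ^ m * n ^ (L.card - m)) := by
      refine Finset.card_biUnion_le.trans ?_
      rw [Finset.sum_congr rfl (fun v _ => hBadcard v), Finset.sum_const, Finset.card_univ,
        smul_eq_mul, Fintype.card_finset_len, Fintype.card_fin]
    have hnat : n.choose k * (n - k) ^ m < n ^ m := by
      exact_mod_cast key_ineq n k m hk hn hm
    have h2 : n.choose k * ((n - k) ^ m * n ^ (L.card - m)) < n ^ m * n ^ (L.card - m) := by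
      rw [← mul_assoc]
      exact Nat.mul_lt_mul_of_lt_of_le hnat (le_refl _) (Nat.pow_pos hn0)
    rw [hΩcard]
    calc B.card ≤ n.choose k * ((n - k) ^ m * n ^ (L.card - m)) := h1
      _ < n ^ m * n ^ (L.card - m) := h2
      _ = n ^ L.card := by rw [← pow_add, Nat.add_sub_cancel' hmL]
  have hBsub : B ⊆ Ω := by
    intro f _
    rw [hΩ, Finset.mem_pi]
    intro a ha
    exact Finset.mem_univ _
  have hne : (Ω \ B).Nonempty := by
    rw [← Finset.card_pos, Finset.card_sdiff_of_subset hBsub]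
    omega
  obtain ⟨f, hf⟩ := hne
  obtain ⟨hfΩ, hfB⟩ := Finset.mem_sdiff.mp hf
  set F : α → Fin n := fun a => if h : a ∈ L then f a h else ⟨0, hn0⟩ with hF
  have hgood : ∀ v : {v : Finset (Fin n) // v.card = k}, ∃ x ∈ S v, F x ∈ v.1 := by
    intro v
    by_contra hcon
    push_neg at hcon
    apply hfB
    rw [hB, Finset.mem_biUnion]
    refine ⟨v, Finset.mem_univ _, ?_⟩
    rw [hBad, Finset.mem_pi]
    intro a ha
    split_ifs with hs
    · rw [Finset.mem_compl]
      have hFa : F a = f a ha := dif_pos ha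
      exact hFa ▸ hcon a hs
    · exact Finset.mem_univ _
  choose g hg1 hg2 using hgood
  refine ⟨g, hg1, ?_⟩
  intro u v hd hcg
  have h1 : F (g u) ∈ u.1 := hg2 u
  have h2 : F (g u) ∈ v.1 := by rw [hcg]; exact hg2 v
  exact Finset.disjoint_left.mp hd h1 h2
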